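/- Let L ≥ 3, let p be a real number with 0 < p < 1, set n = 2L² and m = L², and let e ∈ F₂^{E_L}. Then Σ_{y ∈ im ∂₂} (1−p)^{n − wt(e+y)} p^{wt(e+y)} = 2^{−(n−m+1)} · Σ_{c ∈ ker ∂₁^*} (−1)^{⟨e,c⟩} (1−2p)^{wt(c)}. (The left-hand side is the probability of the stabilizer coset e + C_Z^⊥ of the toric code under the binary symmetric channel with crossover probability p, and the sum on the right runs over all dual cycles of the toric lattice.) -/

import Mathlib

open scoped Matrix


/-- Vertices of the `L × L` toric lattice. -/
abbrev TV (L : ℕ) := ZMod L × ZMod L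

/-- Edge indices of the toric lattice: `((i,j), 0)` joins `(i,j)` and `(i+1,j)`;
`((i,j), 1)` joins `(i,j)` and `(i,j+1)`. -/
abbrev TE (L : ℕ) := (ZMod L × ZMod L) × Fin 2

/-- Plaquette indices of the toric lattice. -/
abbrev TP (L : ℕ) := ZMod L × ZMod L

/-- First endpoint of an edge. -/
def tEp1 {L : ℕ} (e : TE L) : TV L := e.1

/-- Second endpoint of an edge. -/
def tEp2 {L : ℕ} (e : TE L) : TV L :=
  if e.2 = 0 then (e.1.1 + 1, e.1.2) else (e.1.1, e.1.2 + 1)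

/-- Vertex–edge incidence matrix over `F₂`. -/
def tM1 (L : ℕ) : Matrix (TV L) (TE L) (ZMod 2) := fun v e =>
  if v = tEp1 e ∨ v = tEp2 e then 1 else 0

/-- Edge–plaquette incidence matrix over `F₂`: the plaquette `(i,j)` has the four
boundary edges `((i,j),0)`, `((i,j),1)`, `((i,j+1),0)`, `((i+1,j),1)`. -/
def tM2 (L : ℕ) : Matrix (TE L) (TP L) (ZMod 2) := fun e q =>
  if e = ((q.1, q.2), (0 : Fin 2)) ∨ e = ((q.1, q.2), (1 : Fin 2)) ∨
      e = ((q.1, q.2 + 1), (0 : Fin 2)) ∨ e = ((q.1 + 1, q.2), (1 : Fin 2))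
  then 1 else 0

/-- The boundary map `∂₁ : F₂^{E_L} → F₂^{V_L}`, sending the indicator of an edge to
the sum of the indicators of its two endpoints. -/
def tD1 (L : ℕ) [NeZero L] : (TE L → ZMod 2) →ₗ[ZMod 2] (TV L → ZMod 2) :=
  (tM1 L).mulVecLin

/-- The boundary map `∂₂ : F₂^{P_L} → F₂^{E_L}`, sending the indicator of a plaquette to
the sum of the indicators of its four boundary edges. -/
def tD2 (L : ℕ) [NeZero L] : (TP L → ZMod 2) →ₗ[ZMod 2] (TE L → ZMod 2) :=
  (tM2 L).mulVecLin

/-- The transpose `∂₁^* : F₂^{E_L} → F₂^{P_L}` of `∂₂`. -/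
def tD1s (L : ℕ) [NeZero L] : (TE L → ZMod 2) →ₗ[ZMod 2] (TP L → ZMod 2) :=
  (Matrix.transpose (tM2 L)).mulVecLin

/-- The transpose `∂₂^* : F₂^{V_L} → F₂^{E_L}` of `∂₁`. -/
def tD2s (L : ℕ) [NeZero L] : (TV L → ZMod 2) →ₗ[ZMod 2] (TE L → ZMod 2) :=
  (Matrix.transpose (tM1 L)).mulVecLin

/-- Hamming weight of an `F₂`-vector. -/
def wt {α : Type*} [Fintype α] (x : α → ZMod 2) : ℕ :=
  (Finset.univ.filter fun a => x a ≠ 0).card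

/-- Indicator vector of a finite set of coordinates. -/
def ind {α : Type*} [Fintype α] [DecidableEq α] (D : Finset α) : α → ZMod 2 :=
  fun a => if a ∈ D then 1 else 0


-- sign character
noncomputable def s2 (z : ZMod 2) : ℝ := if z = (0 : ZMod 2) then 1 else -1

lemma zmod2_cases (z : ZMod 2) : z = 0 ∨ z = 1 := by revert z; decide

lemma s2_zero : s2 0 = 1 := rfl

lemma s2_add (a b : ZMod 2) : s2 (a + b) = s2 a * s2 b := by
  rcases zmod2_cases a with ha | ha <;> rcases zmod2_cases b with hb | hb <;>
    subst ha <;> subst hb <;>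
    first
    | (rw [show ((1:ZMod 2)+1) = 0 by decide]; norm_num [s2])
    | norm_num [s2]

lemma s2_sum {α : Type*} (s : Finset α) (f : α → ZMod 2) :
    s2 (∑ a ∈ s, f a) = ∏ a ∈ s, s2 (f a) := by
  induction s using Finset.cons_induction with
  | empty => simp [s2]
  | cons a s ha ih => rw [Finset.sum_cons, Finset.prod_cons, s2_add, ih]

lemma sum_zmod2 (g : ZMod 2 → ℝ) : ∑ b : ZMod 2, g b = g 0 + g 1 := by
  rw [show (Finset.univ : Finset (ZMod 2)) = {0, 1} by decide]
  rw [Finset.sum_pair (by decide : (0 : ZMod 2) ≠ 1)]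

-- dot product nondegeneracy (generic)
lemma dot_forall_zero {α : Type*} [Fintype α] [DecidableEq α] (z : α → ZMod 2)
    (h : ∀ y : α → ZMod 2, ∑ a, y a * z a = 0) : z = 0 := by
  funext a
  have := h (Pi.single a 1)
  simpa [Pi.single_apply, ite_mul] using this

noncomputable def dotB (L : ℕ) [NeZero L] :
    LinearMap.BilinForm (ZMod 2) (TE L → ZMod 2) :=
  LinearMap.mk₂ (ZMod 2) (fun x y => ∑ a, x a * y a)
    (fun x x' y => by simp [add_mul, Finset.sum_add_distrib])
    (fun r x y => by simp [Finset.mul_sum, mul_assoc])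
    (fun x y y' => by simp [mul_add, Finset.sum_add_distrib])
    (fun r x y => by simp [Finset.mul_sum, mul_left_comm])

lemma dotB_apply {L : ℕ} [NeZero L] (x y : TE L → ZMod 2) :
    dotB L x y = ∑ a, x a * y a := rfl

lemma dotB_symm {L : ℕ} [NeZero L] (x y : TE L → ZMod 2) :
    dotB L x y = dotB L y x := by
  simp [dotB_apply, mul_comm]

lemma dotB_nondeg {L : ℕ} [NeZero L] : (dotB L).Nondegenerate := by
  refine ⟨fun x hx => ?_, fun x hx => ?_⟩
  · refine dot_forall_zero x fun y => ?_
    rw [show ∑ a, y a * x a = dotB L x y by simp [dotB_apply, mul_comm]]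
    exact hx y
  · refine dot_forall_zero x fun y => ?_
    exact hx y

lemma dotB_refl {L : ℕ} [NeZero L] : (dotB L).IsRefl := by
  intro x y h; rwa [dotB_symm]

-- adjointness
lemma adjoint_dot {L : ℕ} [NeZero L] (y : TP L → ZMod 2) (x : TE L → ZMod 2) :
    ∑ a, (tD2 L y) a * x a = ∑ q, y q * (tD1s L x) q := by
  have h1 : ∑ a, (tD2 L y) a * x a = ((tM2 L).mulVec y) ⬝ᵥ x := rfl
  have h2 : ∑ q, y q * (tD1s L x) q = y ⬝ᵥ ((tM2 L)ᵀ.mulVec x) := rfl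
  rw [h1, h2, Matrix.mulVec_transpose, dotProduct_comm y,
    ← Matrix.dotProduct_mulVec, dotProduct_comm]

lemma ker_eq_orth (L : ℕ) [NeZero L] :
    LinearMap.ker (tD1s L) = (dotB L).orthogonal (LinearMap.range (tD2 L)) := by
  ext x
  rw [LinearMap.mem_ker, LinearMap.BilinForm.mem_orthogonal_iff]
  constructor
  · rintro hx w ⟨y, rfl⟩
    rw [dotB_apply, adjoint_dot, hx]
    simp
  · intro h
    refine dot_forall_zero _ fun y => ?_
    have := h (tD2 L y) ⟨y, rfl⟩
    rw [dotB_apply, adjoint_dot] at this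
    exact this

lemma orth_ker_eq_range (L : ℕ) [NeZero L] :
    (dotB L).orthogonal (LinearMap.ker (tD1s L)) = LinearMap.range (tD2 L) := by
  rw [ker_eq_orth, LinearMap.BilinForm.orthogonal_orthogonal dotB_nondeg dotB_refl]

/-- the key double-orthogonality membership characterization -/
lemma mem_range_iff_dot (L : ℕ) [NeZero L] (z : TE L → ZMod 2) :
    (∃ y, tD2 L y = z) ↔ ∀ c : TE L → ZMod 2, tD1s L c = 0 → ∑ a, z a * c a = 0 := by
  have h := orth_ker_eq_range L
  constructor
  · intro hz c hc
    rw [← LinearMap.mem_range] at hz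
    rw [← h, LinearMap.BilinForm.mem_orthogonal_iff] at hz
    have := hz c (LinearMap.mem_ker.mpr hc)
    rw [dotB_apply] at this
    rw [show ∑ a, z a * c a = ∑ a, c a * z a by simp [mul_comm]]
    exact this
  · intro hz
    rw [← LinearMap.mem_range, ← h, LinearMap.BilinForm.mem_orthogonal_iff]
    intro c hc
    rw [dotB_apply]
    rw [show ∑ a, c a * z a = ∑ a, z a * c a by simp [mul_comm]]
    exact hz c (LinearMap.mem_ker.mp hc)

lemma fin01 : ((0 : Fin 2) = 1) ↔ False := by decide
lemma fin10 : ((1 : Fin 2) = 0) ↔ False := by decide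

lemma tM2_row0 (L : ℕ) (i j : ZMod L) (q : TP L) :
    tM2 L ((i,j),0) q = if q = (i,j) ∨ q = (i, j-1) then 1 else 0 := by
  rcases q with ⟨q1, q2⟩
  have h : (((i,j),(0:Fin 2)) = ((q1, q2), (0 : Fin 2)) ∨ ((i,j),(0:Fin 2)) = ((q1, q2), (1 : Fin 2)) ∨
      ((i,j),(0:Fin 2)) = ((q1, q2 + 1), (0 : Fin 2)) ∨ ((i,j),(0:Fin 2)) = ((q1 + 1, q2), (1 : Fin 2)))
      ↔ ((q1,q2) = (i,j) ∨ (q1,q2) = (i, j-1)) := by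
    simp only [Prod.mk.injEq, fin01, and_true, and_false, or_false, false_or, eq_self_iff_true]
    constructor
    · rintro (⟨h1,h2⟩|⟨h1,h2⟩)
      · exact Or.inl ⟨h1.symm, h2.symm⟩
      · exact Or.inr ⟨h1.symm, by rw [h2]; ring⟩
    · rintro (⟨h1,h2⟩|⟨h1,h2⟩)
      · exact Or.inl ⟨h1.symm, h2.symm⟩
      · exact Or.inr ⟨h1.symm, by rw [h2]; ring⟩
  rw [tM2, if_congr h rfl rfl]

lemma tM2_row1 (L : ℕ) (i j : ZMod L) (q : TP L) :
    tM2 L ((i,j),1) q = if q = (i,j) ∨ q = (i-1, j) then 1 else 0 := by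
  rcases q with ⟨q1, q2⟩
  have h : (((i,j),(1:Fin 2)) = ((q1, q2), (0 : Fin 2)) ∨ ((i,j),(1:Fin 2)) = ((q1, q2), (1 : Fin 2)) ∨
      ((i,j),(1:Fin 2)) = ((q1, q2 + 1), (0 : Fin 2)) ∨ ((i,j),(1:Fin 2)) = ((q1 + 1, q2), (1 : Fin 2)))
      ↔ ((q1,q2) = (i,j) ∨ (q1,q2) = (i-1, j)) := by
    simp only [Prod.mk.injEq, fin10, and_true, and_false, or_false, false_or, eq_self_iff_true]
    constructor
    · rintro (⟨h1,h2⟩|⟨h1,h2⟩)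
      · exact Or.inl ⟨h1.symm, h2.symm⟩
      · exact Or.inr ⟨by rw [h1]; ring, h2.symm⟩
    · rintro (⟨h1,h2⟩|⟨h1,h2⟩)
      · exact Or.inl ⟨h1.symm, h2.symm⟩
      · exact Or.inr ⟨by rw [h1]; ring, h2.symm⟩
  rw [tM2, if_congr h rfl rfl]

lemma sum_ind_pair {α : Type*} [Fintype α] [DecidableEq α] {a b : α} (hab : a ≠ b)
    (c : α → ZMod 2) :
    ∑ q, (if q = a ∨ q = b then (1 : ZMod 2) else 0) * c q = c a + c b := by
  have key : ∀ q, (if q = a ∨ q = b then (1:ZMod 2) else 0) * c q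
      = (if q = a then c q else 0) + (if q = b then c q else 0) := by
    intro q
    by_cases h1 : q = a <;> by_cases h2 : q = b <;> simp_all
  simp only [key, Finset.sum_add_distrib]
  rw [Finset.sum_ite_eq' Finset.univ a c, Finset.sum_ite_eq' Finset.univ b c]
  simp

lemma ne_shift {L : ℕ} (hL : 3 ≤ L) (i j : ZMod L) : ((i,j) : ZMod L × ZMod L) ≠ (i, j-1) := by
  intro h
  have hj : j = j - 1 := (Prod.ext_iff.mp h).2
  have h1 : (1 : ZMod L) = 0 := by linear_combination hj
  have h2 := (ZMod.natCast_eq_zero_iff 1 L).mp (by exact_mod_cast h1)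
  have := Nat.le_of_dvd one_pos h2
  omega

lemma ne_shift' {L : ℕ} (hL : 3 ≤ L) (i j : ZMod L) : ((i,j) : ZMod L × ZMod L) ≠ (i-1, j) := by
  intro h
  have hi : i = i - 1 := (Prod.ext_iff.mp h).1
  have h1 : (1 : ZMod L) = 0 := by linear_combination hi
  have h2 := (ZMod.natCast_eq_zero_iff 1 L).mp (by exact_mod_cast h1)
  have := Nat.le_of_dvd one_pos h2
  omega

lemma mulVec_tM2_0 {L : ℕ} [NeZero L] (hL : 3 ≤ L) (c : TP L → ZMod 2) (i j : ZMod L) :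
    tD2 L c ((i,j),0) = c (i,j) + c (i, j-1) := by
  show ∑ q, tM2 L ((i,j),0) q * c q = _
  simp only [tM2_row0]
  exact sum_ind_pair (ne_shift hL i j) c

lemma mulVec_tM2_1 {L : ℕ} [NeZero L] (hL : 3 ≤ L) (c : TP L → ZMod 2) (i j : ZMod L) :
    tD2 L c ((i,j),1) = c (i,j) + c (i-1, j) := by
  show ∑ q, tM2 L ((i,j),1) q * c q = _
  simp only [tM2_row1]
  exact sum_ind_pair (ne_shift' hL i j) c

lemma ker_tD2_eq {L : ℕ} [NeZero L] (hL : 3 ≤ L) :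
    LinearMap.ker (tD2 L) =
      Submodule.span (ZMod 2) {(fun _ => 1 : TP L → ZMod 2)} := by
  apply le_antisymm
  · intro c hc
    have hc' : tD2 L c = 0 := LinearMap.mem_ker.mp hc
    have step0 : ∀ i j : ZMod L, c (i, j) = c (i, j - 1) := by
      intro i j
      have := congrFun hc' ((i,j),0)
      rw [mulVec_tM2_0 hL] at this
      have h2 : c (i,j) = -c (i, j-1) := eq_neg_of_add_eq_zero_left this
      rwa [CharTwo.neg_eq] at h2
    have step1 : ∀ i j : ZMod L, c (i, j) = c (i - 1, j) := by
      intro i j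
      have := congrFun hc' ((i,j),1)
      rw [mulVec_tM2_1 hL] at this
      have h2 : c (i,j) = -c (i-1, j) := eq_neg_of_add_eq_zero_left this
      rwa [CharTwo.neg_eq] at h2
    have hrow : ∀ (i j : ZMod L) (k : ℕ), c (i, j) = c (i, j - k) := by
      intro i j k
      induction k with
      | zero => simp
      | succ k ih =>
        rw [ih, step0 i (j - k)]
        congr 1
        push_cast
        ring_nf
    have hcol : ∀ (i j : ZMod L) (k : ℕ), c (i, j) = c (i - k, j) := by
      intro i j k
      induction k with
      | zero => simp
      | succ k ih =>
        rw [ih, step1 (i - k) j]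
        congr 1
        push_cast
        ring_nf
    have hconst : ∀ i j : ZMod L, c (i, j) = c (0, 0) := by
      intro i j
      have h1 : c (i, j) = c (i, 0) := by
        have := hrow i j j.val
        rwa [ZMod.natCast_rightInverse j, sub_self] at this
      have h2 : c (i, 0) = c (0, 0) := by
        have := hcol i 0 i.val
        rwa [ZMod.natCast_rightInverse i, sub_self] at this
      rw [h1, h2]
    refine Submodule.mem_span_singleton.mpr ⟨c (0,0), ?_⟩
    funext q
    rcases q with ⟨i, j⟩
    simp [hconst i j]
  · rw [Submodule.span_le, Set.singleton_subset_iff]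
    refine LinearMap.mem_ker.mpr ?_
    funext q
    rcases q with ⟨⟨i, j⟩, d⟩
    have hd : d = 0 ∨ d = 1 := by fin_cases d <;> simp
    rcases hd with hd | hd <;> subst hd
    · rw [show ((0:TE L → ZMod 2)) (((i,j),0) : TE L) = 0 from rfl,
        mulVec_tM2_0 hL]
      exact CharTwo.add_self_eq_zero _
    · rw [show ((0:TE L → ZMod 2)) (((i,j),1) : TE L) = 0 from rfl]
      rw [mulVec_tM2_1 hL]
      exact CharTwo.add_self_eq_zero _

lemma finrank_ker_tD1s {L : ℕ} [NeZero L] (hL : 3 ≤ L) :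
    Module.finrank (ZMod 2) (LinearMap.ker (tD1s L)) = L ^ 2 + 1 := by
  have hTP : Module.finrank (ZMod 2) (TP L → ZMod 2) = L * L := by
    rw [Module.finrank_fintype_fun_eq_card]
    simp [ZMod.card]
  have hTE : Module.finrank (ZMod 2) (TE L → ZMod 2) = L * L * 2 := by
    rw [Module.finrank_fintype_fun_eq_card]
    simp [ZMod.card, mul_assoc]
  have hker2 : Module.finrank (ZMod 2) (LinearMap.ker (tD2 L)) = 1 := by
    rw [ker_tD2_eq hL]
    refine finrank_span_singleton ?_
    intro h
    have := congrFun h (0, 0)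
    simp at this
  have hrn2 := LinearMap.finrank_range_add_finrank_ker (tD2 L)
  rw [hTP, hker2] at hrn2
  have hrank2 : (tM2 L).rank = L * L - 1 := by
    have : (tM2 L).rank = Module.finrank (ZMod 2) (LinearMap.range (tD2 L)) := rfl
    omega
  have hrankT : ((tM2 L)ᵀ).rank = L * L - 1 := by
    rw [Matrix.rank_transpose, hrank2]
  have hrn1 := LinearMap.finrank_range_add_finrank_ker (tD1s L)
  rw [hTE] at hrn1
  have : Module.finrank (ZMod 2) (LinearMap.range (tD1s L)) = ((tM2 L)ᵀ).rank := rfl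
  have hL3 : 3 ≤ L := hL
  have hLL : 3 * 3 ≤ L * L := Nat.mul_le_mul hL3 hL3
  have hpow : L ^ 2 = L * L := sq L
  omega

lemma card_ker_filter {L : ℕ} [NeZero L] (hL : 3 ≤ L) :
    (Finset.univ.filter fun c : TE L → ZMod 2 => tD1s L c = 0).card = 2 ^ (L ^ 2 + 1) := by
  classical
  have h1 : (Finset.univ.filter fun c : TE L → ZMod 2 => tD1s L c = 0).card
      = Fintype.card {c : TE L → ZMod 2 // tD1s L c = 0} := (Fintype.card_subtype _).symm
  have e : {c : TE L → ZMod 2 // tD1s L c = 0} ≃ ↥(LinearMap.ker (tD1s L)) :=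
    Equiv.subtypeEquivRight fun c => (LinearMap.mem_ker (f := tD1s L)).symm
  rw [h1, Fintype.card_congr e, Module.card_eq_pow_finrank (K := ZMod 2), ZMod.card,
    finrank_ker_tD1s hL]

lemma card_filter_eq_zero {α : Type*} [Fintype α] [DecidableEq α] (x : α → ZMod 2) :
    (Finset.univ.filter fun a => x a = 0).card = Fintype.card α - wt x := by
  have h := Finset.card_filter_add_card_filter_not
    (s := (Finset.univ : Finset α)) (p := fun a => x a = 0)
  have h2 : (Finset.univ.filter fun a => ¬ x a = 0).card = wt x := rfl
  rw [Finset.card_univ] at h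
  omega

lemma weight_prod {α : Type*} [Fintype α] [DecidableEq α] (p : ℝ) (x : α → ZMod 2) :
    (1-p) ^ (Fintype.card α - wt x) * p ^ (wt x)
      = ∏ a, (if x a = 0 then 1-p else p) := by
  rw [Finset.prod_ite, Finset.prod_const, Finset.prod_const, card_filter_eq_zero]
  rfl

lemma kernelA {α : Type*} [Fintype α] [DecidableEq α] (p : ℝ) (c : α → ZMod 2) :
    ∑ x : α → ZMod 2, s2 (∑ a, x a * c a) * ((1-p) ^ (Fintype.card α - wt x) * p ^ wt x)
      = (1 - 2*p) ^ wt c := by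
  have h1 : ∀ x : α → ZMod 2,
      s2 (∑ a, x a * c a) * ((1-p) ^ (Fintype.card α - wt x) * p ^ wt x)
        = ∏ a, (s2 (x a * c a) * (if x a = 0 then 1-p else p)) := by
    intro x
    rw [Finset.prod_mul_distrib, ← s2_sum, ← weight_prod]
  rw [Finset.sum_congr rfl fun x _ => h1 x]
  rw [← Fintype.prod_sum (f := fun a (b : ZMod 2) => s2 (b * c a) * (if b = 0 then 1-p else p))]
  have h2 : ∀ a, (∑ b : ZMod 2, s2 (b * c a) * (if b = 0 then 1-p else p))
      = if c a = 0 then 1 else 1 - 2*p := by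
    intro a
    rw [sum_zmod2]
    rcases zmod2_cases (c a) with h | h <;> rw [h] <;> norm_num [s2] <;> ring
  rw [Finset.prod_congr rfl fun a _ => h2 a, Finset.prod_ite, Finset.prod_const,
    Finset.prod_const, one_pow, one_mul]
  rfl

lemma s2_ne_zero_val {z : ZMod 2} (hz : z ≠ 0) : s2 z = -1 := by
  rcases zmod2_cases z with h | h
  · exact absurd h hz
  · rw [h]; norm_num [s2]

lemma char_orth {L : ℕ} [NeZero L] (x : TE L → ZMod 2) :
    ∑ c ∈ Finset.univ.filter (fun c : TE L → ZMod 2 => tD1s L c = 0), s2 (∑ a, x a * c a)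
    = if ∀ c : TE L → ZMod 2, tD1s L c = 0 → (∑ a, x a * c a) = 0
      then ((Finset.univ.filter fun c : TE L → ZMod 2 => tD1s L c = 0).card : ℝ)
      else 0 := by
  by_cases h : ∀ c : TE L → ZMod 2, tD1s L c = 0 → (∑ a, x a * c a) = 0
  · rw [if_pos h, Finset.sum_congr rfl (fun c hc => by
      rw [h c (Finset.mem_filter.mp hc).2, s2_zero]), Finset.sum_const]
    simp
  · rw [if_neg h]
    push_neg at h
    obtain ⟨c₀, hc₀, hx0⟩ := h
    set K := Finset.univ.filter (fun c : TE L → ZMod 2 => tD1s L c = 0) with hK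
    set S := ∑ c ∈ K, s2 (∑ a, x a * c a) with hS
    have dot_add : ∀ c : TE L → ZMod 2,
        (∑ a, x a * (c + c₀) a) = (∑ a, x a * c a) + (∑ a, x a * c₀ a) := by
      intro c
      simp [mul_add, Finset.sum_add_distrib]
    have key : S = -S := by
      have step : (∑ c ∈ K, s2 (∑ a, x a * (c + c₀) a)) = S := by
        refine Finset.sum_equiv (Equiv.addRight c₀) ?_ ?_
        · intro c
          simp [hK, map_add, hc₀]
        · intro c hc
          rfl
      calc S = ∑ c ∈ K, s2 (∑ a, x a * (c + c₀) a) := step.symm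
      _ = ∑ c ∈ K, -s2 (∑ a, x a * c a) := Finset.sum_congr rfl (fun c _ => by
            rw [dot_add c, s2_add, s2_ne_zero_val hx0, mul_neg_one])
      _ = -S := by rw [hS, Finset.sum_neg_distrib]
    linarith


set_option maxHeartbeats 2000000 in
/-- **Kramers–Wannier–MacWilliams duality for the toric code.**
With `n = 2L²` qubits and `m = L²` plaquettes, the probability of the stabilizer coset
`e + C_Z^⊥ = e + im ∂₂` under the binary symmetric channel with crossover probability
`p` equals `2^{−(n−m+1)} Σ_{c ∈ ker ∂₁^*} (−1)^{⟨e,c⟩} (1−2p)^{wt c}`, the sum running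
over all dual cycles of the toric lattice. -/
theorem toric_coset_probability_dual_cycle_expansion
    (L n m : ℕ) [NeZero L] (hL : 3 ≤ L)
    (hn : n = 2 * L ^ 2) (hm : m = L ^ 2)
    (p : ℝ) (hp0 : 0 < p) (hp1 : p < 1)
    (e : TE L → ZMod 2) :
    ∑ y ∈ Finset.univ.filter (fun y : TE L → ZMod 2 => ∃ c, tD2 L c = y),
        (1 - p) ^ (n - wt (e + y)) * p ^ wt (e + y)
    = (2 : ℝ) ^ (-((n : ℤ) - (m : ℤ) + 1)) *
        ∑ c ∈ Finset.univ.filter (fun c : TE L → ZMod 2 => tD1s L c = 0),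
          (if (∑ a, e a * c a) = (0 : ZMod 2) then (1 : ℝ) else -1) *
            (1 - 2 * p) ^ wt c := by
  have hcard : Fintype.card (TE L) = n := by
    rw [hn]
    simp only [Fintype.card_prod, ZMod.card, Fintype.card_fin]
    ring
  have hcancel : ∀ x : TE L → ZMod 2, e + (e + x) = x := by
    intro x
    funext a
    show e a + (e a + x a) = x a
    rw [← add_assoc, CharTwo.add_self_eq_zero, zero_add]
  have hsplit : ∀ (x c : TE L → ZMod 2),
      (∑ a, (e + x) a * c a) = (∑ a, e a * c a) + (∑ a, x a * c a) := by
    intro x c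
    show (∑ a, (e a + x a) * c a) = _
    simp [add_mul, Finset.sum_add_distrib]
  have hkern : ∀ c : TE L → ZMod 2, (1 - 2*p) ^ wt c
      = ∑ x : TE L → ZMod 2, s2 (∑ a, x a * c a) * ((1-p) ^ (n - wt x) * p ^ wt x) := by
    intro c
    have h := (kernelA p c).symm
    rwa [hcard] at h
  have hmain : ∑ c ∈ Finset.univ.filter (fun c : TE L → ZMod 2 => tD1s L c = 0),
        s2 (∑ a, e a * c a) * (1 - 2*p) ^ wt c
      = ((Finset.univ.filter fun c : TE L → ZMod 2 => tD1s L c = 0).card : ℝ) *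
          ∑ y ∈ Finset.univ.filter (fun y : TE L → ZMod 2 => ∃ c, tD2 L c = y),
            (1 - p) ^ (n - wt (e + y)) * p ^ wt (e + y) := by
    calc ∑ c ∈ Finset.univ.filter (fun c : TE L → ZMod 2 => tD1s L c = 0),
          s2 (∑ a, e a * c a) * (1 - 2*p) ^ wt c
        = ∑ c ∈ Finset.univ.filter (fun c : TE L → ZMod 2 => tD1s L c = 0),
            ∑ x : TE L → ZMod 2,
              s2 (∑ a, e a * c a) * (s2 (∑ a, x a * c a) * ((1-p) ^ (n - wt x) * p ^ wt x)) := by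
          refine Finset.sum_congr rfl fun c _ => ?_
          rw [hkern c, Finset.mul_sum]
      _ = ∑ x : TE L → ZMod 2,
            ∑ c ∈ Finset.univ.filter (fun c : TE L → ZMod 2 => tD1s L c = 0),
              s2 (∑ a, e a * c a) * (s2 (∑ a, x a * c a) * ((1-p) ^ (n - wt x) * p ^ wt x)) :=
          Finset.sum_comm
      _ = ∑ x : TE L → ZMod 2,
            (∑ c ∈ Finset.univ.filter (fun c : TE L → ZMod 2 => tD1s L c = 0),
              s2 (∑ a, (e + x) a * c a)) * ((1-p) ^ (n - wt x) * p ^ wt x) := by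
          refine Finset.sum_congr rfl fun x _ => ?_
          rw [Finset.sum_mul]
          refine Finset.sum_congr rfl fun c _ => ?_
          rw [hsplit x c, s2_add, mul_assoc]
      _ = ∑ x : TE L → ZMod 2,
            (if (∃ y, tD2 L y = e + x)
              then ((Finset.univ.filter fun c : TE L → ZMod 2 => tD1s L c = 0).card : ℝ)
              else 0) * ((1-p) ^ (n - wt x) * p ^ wt x) := by
          refine Finset.sum_congr rfl fun x _ => ?_
          rw [char_orth (e + x)]
          congr 1
          exact if_congr (Iff.symm (mem_range_iff_dot L (e + x))) rfl rfl
      _ = ∑ x ∈ Finset.univ.filter (fun x : TE L → ZMod 2 => ∃ y, tD2 L y = e + x),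
            ((Finset.univ.filter fun c : TE L → ZMod 2 => tD1s L c = 0).card : ℝ) *
              ((1-p) ^ (n - wt x) * p ^ wt x) := by
          rw [Finset.sum_filter]
          refine Finset.sum_congr rfl fun x _ => ?_
          rw [ite_mul, zero_mul]
      _ = ((Finset.univ.filter fun c : TE L → ZMod 2 => tD1s L c = 0).card : ℝ) *
            ∑ x ∈ Finset.univ.filter (fun x : TE L → ZMod 2 => ∃ y, tD2 L y = e + x),
              (1-p) ^ (n - wt x) * p ^ wt x := by
          rw [Finset.mul_sum]
      _ = ((Finset.univ.filter fun c : TE L → ZMod 2 => tD1s L c = 0).card : ℝ) *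
            ∑ y ∈ Finset.univ.filter (fun y : TE L → ZMod 2 => ∃ c, tD2 L c = y),
              (1 - p) ^ (n - wt (e + y)) * p ^ wt (e + y) := by
          congr 1
          refine Finset.sum_equiv (Equiv.addLeft e) ?_ ?_
          · intro x
            simp only [Finset.mem_filter, Finset.mem_univ, true_and, Equiv.coe_addLeft]
          · intro x _
            rw [show (Equiv.addLeft e) x = e + x from rfl, hcancel x]
  have hcoef : (2:ℝ) ^ (-((n : ℤ) - (m : ℤ) + 1)) *
      (((Finset.univ.filter fun c : TE L → ZMod 2 => tD1s L c = 0).card : ℕ) : ℝ) = 1 := by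
    rw [card_ker_filter hL]
    have hexp : -((n : ℤ) - (m : ℤ) + 1) = -((L^2 + 1 : ℕ) : ℤ) := by
      subst hn hm; push_cast; ring
    rw [hexp, zpow_neg, zpow_natCast]
    push_cast
    rw [inv_mul_cancel₀]
    positivity
  have hif : ∀ c : TE L → ZMod 2,
      (if (∑ a, e a * c a) = (0 : ZMod 2) then (1 : ℝ) else -1) = s2 (∑ a, e a * c a) :=
    fun c => rfl
  calc ∑ y ∈ Finset.univ.filter (fun y : TE L → ZMod 2 => ∃ c, tD2 L c = y),
        (1 - p) ^ (n - wt (e + y)) * p ^ wt (e + y)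
      = ((2:ℝ) ^ (-((n : ℤ) - (m : ℤ) + 1)) *
          (((Finset.univ.filter fun c : TE L → ZMod 2 => tD1s L c = 0).card : ℕ) : ℝ)) *
          ∑ y ∈ Finset.univ.filter (fun y : TE L → ZMod 2 => ∃ c, tD2 L c = y),
            (1 - p) ^ (n - wt (e + y)) * p ^ wt (e + y) := by
        rw [hcoef, one_mul]
    _ = (2:ℝ) ^ (-((n : ℤ) - (m : ℤ) + 1)) *
          ∑ c ∈ Finset.univ.filter (fun c : TE L → ZMod 2 => tD1s L c = 0),
            (if (∑ a, e a * c a) = (0 : ZMod 2) then (1 : ℝ) else -1) * (1 - 2 * p) ^ wt c := by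
        rw [mul_assoc, ← hmain]
        congr 1
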